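/- Correctness of the coverability algorithm for reconfigurable well-structured broadcast networks: a configuration s is coverable in RBN(P) if and only if s is coverable (i.e., some s' ≥ s is reachable from an initial configuration) in the saturated process P'_w. -/

import Mathlib

def IsWqo {S : Type*} (le : S → S → Prop) : Prop :=
  Reflexive le ∧ Transitive le ∧ ∀ f : ℕ → S, ∃ i j, i < j ∧ le (f i) (f j)

/-- A broadcast transition on a fixed graph `(V, E)`. -/
def Broadcast {S A V : Type*} (Rb Rr : S → A → S → Prop)
    (E : V → V → Prop) (L L' : V → S) (a : A) : Prop :=
  ∃ v, Rb (L v) a (L' v) ∧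
    (∀ u, E v u → Rr (L u) a (L' u)) ∧
    (∀ w, w ≠ v → ¬ E v w → L' w = L w)

/-- One step of a reconfigurable broadcast network. -/
def RBNStep {S A V : Type*} (Rb Rr : S → A → S → Prop)
    (c c' : (V → V → Prop) × (V → S)) : Prop :=
  (c'.1 = c.1 ∧ ∃ a, Broadcast Rb Rr c.1 c.2 c'.2 a) ∨
  (c'.2 = c.2 ∧ (∀ v, ¬ c'.1 v v) ∧ (∀ u v, c'.1 u v → c'.1 v u))

/-- Coverability of `s` in the reconfigurable broadcast network `RBN(P)`. -/
def RBNCoverable {S A : Type*} (Rb Rr : S → A → S → Prop) (S₀ : Set S)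
    (le : S → S → Prop) (s : S) : Prop :=
  ∃ (n : ℕ) (E₀ : Fin n → Fin n → Prop) (L₀ : Fin n → S)
    (E : Fin n → Fin n → Prop) (L : Fin n → S),
    (∀ v, ¬ E₀ v v) ∧ (∀ u v, E₀ u v → E₀ v u) ∧
    (∀ v, L₀ v ∈ S₀) ∧
    Relation.ReflTransGen (RBNStep Rb Rr) (E₀, L₀) (E, L) ∧
    ∃ v, le s (L v)

/-- One step of the process `P'` in which all broadcast transitions are kept
and only the receive transitions with letters in `T` are kept. -/
def stepT {S A : Type*} (Rb Rr : S → A → S → Prop) (T : Set A)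
    (s s' : S) : Prop :=
  (∃ a, Rb s a s') ∨ (∃ a ∈ T, Rr s a s')

/-- Reachability from an initial configuration in the process `P'` with
receive letters restricted to `T`. -/
def ReachT {S A : Type*} (Rb Rr : S → A → S → Prop) (S₀ : Set S)
    (T : Set A) (s : S) : Prop :=
  ∃ s₀ ∈ S₀, Relation.ReflTransGen (stepT Rb Rr T) s₀ s

/-- Coverability in the process `P'` with receive letters restricted to `T`. -/
def CovT {S A : Type*} (Rb Rr : S → A → S → Prop) (S₀ : Set S)
    (le : S → S → Prop) (T : Set A) (s : S) : Prop :=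
  ∃ s', le s s' ∧ ReachT Rb Rr S₀ T s'

/-- The saturation sequence of the algorithm: `P'₀` has no receive
transitions; `P'ᵢ₊₁` additionally allows receiving every letter `a` such that
some configuration enabling a `!!a`-broadcast is coverable in `P'ᵢ`. -/
def Tseq {S A : Type*} (Rb Rr : S → A → S → Prop) (S₀ : Set S)
    (le : S → S → Prop) : ℕ → Set A
  | 0 => ∅
  | i + 1 => Tseq Rb Rr S₀ le i ∪
      {a | ∃ c c', Rb c a c' ∧ CovT Rb Rr S₀ le (Tseq Rb Rr S₀ le i) c}

/-- The saturated (fixed-point) set of receive letters. -/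
def Tw {S A : Type*} (Rb Rr : S → A → S → Prop) (S₀ : Set S)
    (le : S → S → Prop) : Set A :=
  ⋃ i, Tseq Rb Rr S₀ le i

section SaturationAux

open Relation

variable {S A : Type*}

private lemma stepT_mono' (Rb Rr : S → A → S → Prop) {T T' : Set A} (h : T ⊆ T')
    {s s' : S} (hs : stepT Rb Rr T s s') : stepT Rb Rr T' s s' := by
  rcases hs with ⟨a, ha⟩ | ⟨a, haT, ha⟩
  · exact Or.inl ⟨a, ha⟩
  · exact Or.inr ⟨a, h haT, ha⟩

private lemma Tseq_mono' (Rb Rr : S → A → S → Prop) (S₀ : Set S) (le : S → S → Prop)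
    {i j : ℕ} (h : i ≤ j) : Tseq Rb Rr S₀ le i ⊆ Tseq Rb Rr S₀ le j := by
  induction h with
  | refl => exact subset_rfl
  | step _ ih => exact ih.trans Set.subset_union_left

private lemma reachT_index (Rb Rr : S → A → S → Prop) (S₀ : Set S) (le : S → S → Prop)
    {s : S} (h : ReachT Rb Rr S₀ (Tw Rb Rr S₀ le) s) :
    ∃ i, ReachT Rb Rr S₀ (Tseq Rb Rr S₀ le i) s := by
  obtain ⟨s₀, hs₀, hrun⟩ := h
  suffices h : ∃ i, Relation.ReflTransGen (stepT Rb Rr (Tseq Rb Rr S₀ le i)) s₀ s by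
    obtain ⟨i, hi⟩ := h; exact ⟨i, s₀, hs₀, hi⟩
  induction hrun with
  | refl => exact ⟨0, .refl⟩
  | tail hab step ih =>
    obtain ⟨i, hi⟩ := ih
    rcases step with ⟨a, ha⟩ | ⟨a, haT, ha⟩
    · exact ⟨i, hi.tail (Or.inl ⟨a, ha⟩)⟩
    · obtain ⟨j, hj⟩ := Set.mem_iUnion.1 haT
      refine ⟨max i j, ?_⟩
      have h1 := Relation.ReflTransGen.mono (fun x y hxy =>
        stepT_mono' Rb Rr (Tseq_mono' Rb Rr S₀ le (le_max_left i j)) hxy) _ _ hi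
      exact h1.tail (Or.inr ⟨a, Tseq_mono' Rb Rr S₀ le (le_max_right i j) hj, ha⟩)

private lemma covT_index (Rb Rr : S → A → S → Prop) (S₀ : Set S) (le : S → S → Prop)
    {s : S} (h : CovT Rb Rr S₀ le (Tw Rb Rr S₀ le) s) :
    ∃ i, CovT Rb Rr S₀ le (Tseq Rb Rr S₀ le i) s := by
  obtain ⟨s', hle, hre⟩ := h
  obtain ⟨i, hi⟩ := reachT_index Rb Rr S₀ le hre
  exact ⟨i, s', hle, hi⟩

private lemma letter_lemma (Rb Rr : S → A → S → Prop) (S₀ : Set S) (le : S → S → Prop)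
    {a : A} : ∀ {i : ℕ}, a ∈ Tseq Rb Rr S₀ le i →
      ∃ j < i, ∃ c c', Rb c a c' ∧ CovT Rb Rr S₀ le (Tseq Rb Rr S₀ le j) c := by
  intro i
  induction i with
  | zero => intro h; exact absurd h (Set.notMem_empty a)
  | succ i ih =>
    intro h
    rw [Tseq] at h
    rcases h with h | ⟨c, c', hb, hc⟩
    · obtain ⟨j, hj, hx⟩ := ih h
      exact ⟨j, hj.trans (Nat.lt_succ_self i), hx⟩
    · exact ⟨i, Nat.lt_succ_self i, c, c', hb, hc⟩

/-- Disjoint union of two graphs. -/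
private def sumGraph {V W : Type*} (E : V → V → Prop) (F : W → W → Prop) :
    V ⊕ W → V ⊕ W → Prop
  | .inl u, .inl v => E u v
  | .inr u, .inr v => F u v
  | _, _ => False

private lemma step_liftLeft {V W : Type*} (Rb Rr : S → A → S → Prop)
    {F : W → W → Prop} (hFi : ∀ w, ¬ F w w) (hFs : ∀ u v, F u v → F v u) (M : W → S)
    {c c' : (V → V → Prop) × (V → S)} (h : RBNStep Rb Rr c c') :
    RBNStep Rb Rr (sumGraph c.1 F, Sum.elim c.2 M) (sumGraph c'.1 F, Sum.elim c'.2 M) := by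
  rcases h with ⟨hE, a, v, hb, hrecv, hfro⟩ | ⟨hL, hirr, hsym⟩
  · left
    refine ⟨by simp only; rw [hE], a, Sum.inl v, hb, ?_, ?_⟩
    · rintro (u | u) hu
      · exact hrecv u hu
      · exact hu.elim
    · rintro (w | w) hne hnE
      · exact hfro w (fun h => hne (congrArg Sum.inl h)) hnE
      · rfl
  · right
    refine ⟨by simp only; rw [hL], ?_, ?_⟩
    · rintro (v | v) h
      · exact hirr v h
      · exact hFi v h
    · rintro (u | u) (v | v) h
      · exact hsym u v h
      · exact h.elim
      · exact h.elim
      · exact hFs u v h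

private lemma run_liftLeft {V W : Type*} (Rb Rr : S → A → S → Prop)
    {F : W → W → Prop} (hFi : ∀ w, ¬ F w w) (hFs : ∀ u v, F u v → F v u) (M : W → S)
    {E E' : V → V → Prop} {L L' : V → S}
    (h : Relation.ReflTransGen (RBNStep Rb Rr) (E, L) (E', L')) :
    Relation.ReflTransGen (RBNStep Rb Rr)
      (sumGraph E F, Sum.elim L M) (sumGraph E' F, Sum.elim L' M) :=
  Relation.ReflTransGen.lift (fun (c : (V → V → Prop) × (V → S)) => (sumGraph c.1 F, Sum.elim c.2 M))
    (fun _ _ hab => step_liftLeft Rb Rr hFi hFs M hab) _ _ h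

private lemma step_liftRight {V W : Type*} (Rb Rr : S → A → S → Prop)
    {F : V → V → Prop} (hFi : ∀ w, ¬ F w w) (hFs : ∀ u v, F u v → F v u) (M : V → S)
    {c c' : (W → W → Prop) × (W → S)} (h : RBNStep Rb Rr c c') :
    RBNStep Rb Rr (sumGraph F c.1, Sum.elim M c.2) (sumGraph F c'.1, Sum.elim M c'.2) := by
  rcases h with ⟨hE, a, v, hb, hrecv, hfro⟩ | ⟨hL, hirr, hsym⟩
  · left
    refine ⟨by simp only; rw [hE], a, Sum.inr v, hb, ?_, ?_⟩
    · rintro (u | u) hu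
      · exact hu.elim
      · exact hrecv u hu
    · rintro (w | w) hne hnE
      · rfl
      · exact hfro w (fun h => hne (congrArg Sum.inr h)) hnE
  · right
    refine ⟨by simp only; rw [hL], ?_, ?_⟩
    · rintro (v | v) h
      · exact hFi v h
      · exact hirr v h
    · rintro (u | u) (v | v) h
      · exact hFs u v h
      · exact h.elim
      · exact h.elim
      · exact hsym u v h

private lemma run_liftRight {V W : Type*} (Rb Rr : S → A → S → Prop)
    {F : V → V → Prop} (hFi : ∀ w, ¬ F w w) (hFs : ∀ u v, F u v → F v u) (M : V → S)
    {E E' : W → W → Prop} {L L' : W → S}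
    (h : Relation.ReflTransGen (RBNStep Rb Rr) (E, L) (E', L')) :
    Relation.ReflTransGen (RBNStep Rb Rr)
      (sumGraph F E, Sum.elim M L) (sumGraph F E', Sum.elim M L') :=
  Relation.ReflTransGen.lift (fun (c : (W → W → Prop) × (W → S)) => (sumGraph F c.1, Sum.elim M c.2))
    (fun _ _ hab => step_liftRight Rb Rr hFi hFs M hab) _ _ h

private lemma step_relabel {V W : Type*} (Rb Rr : S → A → S → Prop) (e : V ≃ W)
    {c c' : (V → V → Prop) × (V → S)} (h : RBNStep Rb Rr c c') :
    RBNStep Rb Rr (fun u v => c.1 (e.symm u) (e.symm v), fun u => c.2 (e.symm u))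
      (fun u v => c'.1 (e.symm u) (e.symm v), fun u => c'.2 (e.symm u)) := by
  rcases h with ⟨hE, a, v, hb, hrecv, hfro⟩ | ⟨hL, hirr, hsym⟩
  · left
    refine ⟨by simp only; rw [hE], a, e v, ?_, ?_, ?_⟩
    · simpa using hb
    · intro u hu
      simp only [Equiv.symm_apply_apply] at hu
      exact hrecv (e.symm u) hu
    · intro w hne hnE
      simp only [Equiv.symm_apply_apply] at hnE
      exact hfro (e.symm w) (fun h => hne (by rw [← h]; simp)) hnE
  · right
    exact ⟨by simp only; rw [hL], fun v h => hirr _ h, fun u v h => hsym _ _ h⟩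

private lemma run_relabel {V W : Type*} (Rb Rr : S → A → S → Prop) (e : V ≃ W)
    {c c' : (V → V → Prop) × (V → S)}
    (h : Relation.ReflTransGen (RBNStep Rb Rr) c c') :
    Relation.ReflTransGen (RBNStep Rb Rr)
      (fun u v => c.1 (e.symm u) (e.symm v), fun u => c.2 (e.symm u))
      (fun u v => c'.1 (e.symm u) (e.symm v), fun u => c'.2 (e.symm u)) :=
  Relation.ReflTransGen.lift
    (fun (c : (V → V → Prop) × (V → S)) => ((fun u v => c.1 (e.symm u) (e.symm v), fun u => c.2 (e.symm u)) :
      (W → W → Prop) × (W → S)))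
    (fun _ _ hab => step_relabel Rb Rr e hab) _ _ h

/-- Exact reachability of a state at some node of an RBN run. -/
private def Reach' (Rb Rr : S → A → S → Prop) (S₀ : Set S) (s : S) : Prop :=
  ∃ (n : ℕ) (E₀ : Fin n → Fin n → Prop) (L₀ : Fin n → S)
    (E : Fin n → Fin n → Prop) (L : Fin n → S),
    (∀ v, ¬ E₀ v v) ∧ (∀ u v, E₀ u v → E₀ v u) ∧ (∀ v, L₀ v ∈ S₀) ∧
    Relation.ReflTransGen (RBNStep Rb Rr) (E₀, L₀) (E, L) ∧ ∃ v, L v = s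

private lemma reach'_of_sum (Rb Rr : S → A → S → Prop) (S₀ : Set S) {n₁ n₂ : ℕ}
    {E₀ E : Fin n₁ ⊕ Fin n₂ → Fin n₁ ⊕ Fin n₂ → Prop} {L₀ L : Fin n₁ ⊕ Fin n₂ → S}
    (h1 : ∀ v, ¬ E₀ v v) (h2 : ∀ u v, E₀ u v → E₀ v u) (h3 : ∀ v, L₀ v ∈ S₀)
    (h4 : Relation.ReflTransGen (RBNStep Rb Rr) (E₀, L₀) (E, L)) {s : S}
    (v : Fin n₁ ⊕ Fin n₂) (hv : L v = s) :
    Reach' Rb Rr S₀ s := by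
  let e := finSumFinEquiv (m := n₁) (n := n₂)
  refine ⟨n₁ + n₂, fun u w => E₀ (e.symm u) (e.symm w), fun u => L₀ (e.symm u),
    fun u w => E (e.symm u) (e.symm w), fun u => L (e.symm u),
    fun u h => h1 _ h, fun u w h => h2 _ _ h, fun u => h3 _,
    run_relabel Rb Rr e h4, ⟨e v, ?_⟩⟩
  simp only [Equiv.symm_apply_apply]
  exact hv

private lemma reach'_init (Rb Rr : S → A → S → Prop) (S₀ : Set S) {s : S}
    (hs : s ∈ S₀) : Reach' Rb Rr S₀ s :=
  ⟨1, fun _ _ => False, fun _ => s, fun _ _ => False, fun _ => s,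
   fun _ h => h, fun _ _ h => h.elim, fun _ => hs, .refl, ⟨0, rfl⟩⟩

private lemma reach'_broadcast (Rb Rr : S → A → S → Prop) (S₀ : Set S) {u s : S}
    (h : Reach' Rb Rr S₀ u) {a : A} (hb : Rb u a s) : Reach' Rb Rr S₀ s := by
  classical
  obtain ⟨n, E₀, L₀, E, L, h1, h2, h3, h4, v, hv⟩ := h
  refine ⟨n, E₀, L₀, fun _ _ => False, fun w => if w = v then s else L w,
    h1, h2, h3, ?_, v, if_pos rfl⟩
  have step1 : RBNStep Rb Rr (E, L) ((fun _ _ => False : Fin n → Fin n → Prop), L) :=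
    Or.inr ⟨rfl, fun _ h => h, fun _ _ h => h.elim⟩
  have step2 : RBNStep Rb Rr ((fun _ _ => False : Fin n → Fin n → Prop), L)
      ((fun _ _ => False : Fin n → Fin n → Prop), fun w => if w = v then s else L w) := by
    refine Or.inl ⟨rfl, a, v, ?_, fun _ hu => hu.elim, fun w hne _ => if_neg hne⟩
    show Rb (L v) a (if v = v then s else L v)
    rw [if_pos rfl, hv]
    exact hb
  exact (h4.tail step1).tail step2

private lemma reach'_receive (le : S → S → Prop) (Rb Rr : S → A → S → Prop) (S₀ : Set S)
    (compatB : ∀ s₁ t₁ a s₂, le s₁ t₁ → Rb s₁ a s₂ → ∃ t₂, le s₂ t₂ ∧ Rb t₁ a t₂)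
    {u c c' c₂ s : S} {a : A}
    (h1 : Reach' Rb Rr S₀ u) (h2 : Reach' Rb Rr S₀ c₂)
    (hle : le c c₂) (hbc : Rb c a c') (hrr : Rr u a s) :
    Reach' Rb Rr S₀ s := by
  classical
  obtain ⟨n₁, E₀, L₀, E, L, a1, a2, a3, a4, v₁, hv₁⟩ := h1
  obtain ⟨n₂, F₀, M₀, F, M, b1, b2, b3, b4, v₂, hv₂⟩ := h2
  obtain ⟨c₃, hc₃le, hc₃⟩ := compatB c c₂ a c' hle hbc
  set x₁ : Fin n₁ ⊕ Fin n₂ := Sum.inl v₁ with hx₁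
  set x₂ : Fin n₁ ⊕ Fin n₂ := Sum.inr v₂ with hx₂
  have hx12 : x₁ ≠ x₂ := by simp [hx₁, hx₂]
  set G : Fin n₁ ⊕ Fin n₂ → Fin n₁ ⊕ Fin n₂ → Prop :=
    fun x y => (x = x₁ ∧ y = x₂) ∨ (x = x₂ ∧ y = x₁) with hG
  set Lf : Fin n₁ ⊕ Fin n₂ → S :=
    fun x => if x = x₁ then s else if x = x₂ then c₃ else Sum.elim L M x with hLf
  have r1 : Relation.ReflTransGen (RBNStep Rb Rr)
      (sumGraph E₀ F₀, Sum.elim L₀ M₀) (sumGraph E F₀, Sum.elim L M₀) :=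
    run_liftLeft Rb Rr b1 b2 M₀ a4
  have step2 : RBNStep Rb Rr (sumGraph E F₀, Sum.elim L M₀)
      (sumGraph (fun _ _ => False : Fin n₁ → Fin n₁ → Prop) F₀, Sum.elim L M₀) := by
    refine Or.inr ⟨rfl, ?_, ?_⟩
    · rintro (v | v) h
      · exact h
      · exact b1 v h
    · rintro (p | p) (q | q) h
      · exact h.elim
      · exact h.elim
      · exact h.elim
      · exact b2 p q h
  have r3 : Relation.ReflTransGen (RBNStep Rb Rr)
      (sumGraph (fun _ _ => False : Fin n₁ → Fin n₁ → Prop) F₀, Sum.elim L M₀)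
      (sumGraph (fun _ _ => False : Fin n₁ → Fin n₁ → Prop) F, Sum.elim L M) :=
    run_liftRight Rb Rr (fun _ h => h) (fun _ _ h => h.elim) L b4
  have step4 : RBNStep Rb Rr
      (sumGraph (fun _ _ => False : Fin n₁ → Fin n₁ → Prop) F, Sum.elim L M)
      (G, Sum.elim L M) := by
    refine Or.inr ⟨rfl, ?_, ?_⟩
    · rintro x (⟨hxa, hxb⟩ | ⟨hxa, hxb⟩)
      · exact hx12 (hxa ▸ hxb)
      · exact hx12 (hxb ▸ hxa)
    · rintro p q (⟨hpa, hqa⟩ | ⟨hpa, hqa⟩)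
      · exact Or.inr ⟨hqa, hpa⟩
      · exact Or.inl ⟨hqa, hpa⟩
  have step5 : RBNStep Rb Rr (G, Sum.elim L M) (G, Lf) := by
    refine Or.inl ⟨rfl, a, x₂, ?_, ?_, ?_⟩
    · have hLfx₂ : Lf x₂ = c₃ := by
        rw [hLf]
        simp only
        rw [if_neg (Ne.symm hx12)]
        simp
      show Rb (Sum.elim L M x₂) a (Lf x₂)
      rw [hLfx₂, hx₂]
      show Rb (M v₂) a c₃
      rw [hv₂]
      exact hc₃
    · rintro y (⟨hya, _⟩ | ⟨_, hyb⟩)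
      · exact absurd hya hx12.symm
      · subst hyb
        have hLfx₁ : Lf x₁ = s := if_pos rfl
        show Rr (Sum.elim L M x₁) a (Lf x₁)
        rw [hLfx₁, hx₁]
        show Rr (L v₁) a s
        rw [hv₁]
        exact hrr
    · intro w hne hnG
      have hw₁ : w ≠ x₁ := by
        intro h
        exact hnG (Or.inr ⟨rfl, h⟩)
      show Lf w = Sum.elim L M w
      rw [hLf]
      simp only
      rw [if_neg hw₁, if_neg hne]
  have hrun : Relation.ReflTransGen (RBNStep Rb Rr)
      (sumGraph E₀ F₀, Sum.elim L₀ M₀) (G, Lf) :=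
    (((r1.tail step2).trans r3).tail step4).tail step5
  refine reach'_of_sum Rb Rr S₀ ?_ ?_ ?_ hrun x₁ (if_pos rfl)
  · rintro (v | v) h
    · exact a1 v h
    · exact b1 v h
  · rintro (p | p) (q | q) h
    · exact a2 p q h
    · exact h.elim
    · exact h.elim
    · exact b2 p q h
  · rintro (v | v)
    · exact a3 v
    · exact b3 v

private lemma reach'_of_reachT (le : S → S → Prop) (Rb Rr : S → A → S → Prop) (S₀ : Set S)
    (compatB : ∀ s₁ t₁ a s₂, le s₁ t₁ → Rb s₁ a s₂ → ∃ t₂, le s₂ t₂ ∧ Rb t₁ a t₂) :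
    ∀ i, ∀ s : S, ReachT Rb Rr S₀ (Tseq Rb Rr S₀ le i) s → Reach' Rb Rr S₀ s := by
  intro i
  induction i using Nat.strong_induction_on with
  | _ i ih =>
    intro s hs
    obtain ⟨s₀, hs₀, hrun⟩ := hs
    induction hrun with
    | refl => exact reach'_init Rb Rr S₀ hs₀
    | tail hab step ih2 =>
      rcases step with ⟨a, ha⟩ | ⟨a, haT, ha⟩
      · exact reach'_broadcast Rb Rr S₀ ih2 ha
      · obtain ⟨j, hj, c, c', hbc, c₂, hle, hc₂⟩ := letter_lemma Rb Rr S₀ le haT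
        exact reach'_receive le Rb Rr S₀ compatB ih2 (ih j hj c₂ hc₂) hle hbc ha

private lemma sound_run (le : S → S → Prop) (Rb Rr : S → A → S → Prop) (S₀ : Set S)
    (hrefl : Reflexive le) {n : ℕ}
    {E₀ : Fin n → Fin n → Prop} {L₀ : Fin n → S} (h3 : ∀ v, L₀ v ∈ S₀)
    {c : (Fin n → Fin n → Prop) × (Fin n → S)}
    (h4 : Relation.ReflTransGen (RBNStep Rb Rr) (E₀, L₀) c) :
    ∀ v, ReachT Rb Rr S₀ (Tw Rb Rr S₀ le) (c.2 v) := by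
  classical
  induction h4 with
  | refl => exact fun v => ⟨L₀ v, h3 v, .refl⟩
  | @tail b c hab step ih =>
    rcases step with ⟨hE, a, v₀, hb, hrecv, hfro⟩ | ⟨hL, _, _⟩
    · intro v
      by_cases hv : v = v₀
      · subst hv
        obtain ⟨t₀, ht₀, hr⟩ := ih v
        exact ⟨t₀, ht₀, hr.tail (Or.inl ⟨a, hb⟩)⟩
      · by_cases he : b.1 v₀ v
        · have hcov : CovT Rb Rr S₀ le (Tw Rb Rr S₀ le) (b.2 v₀) :=
            ⟨b.2 v₀, hrefl _, ih v₀⟩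
          obtain ⟨i, hi⟩ := covT_index Rb Rr S₀ le hcov
          have haTw : a ∈ Tw Rb Rr S₀ le := by
            refine Set.mem_iUnion.2 ⟨i + 1, ?_⟩
            rw [Tseq]
            exact Set.mem_union_right _ ⟨b.2 v₀, c.2 v₀, hb, hi⟩
          obtain ⟨t₀, ht₀, hr⟩ := ih v
          exact ⟨t₀, ht₀, hr.tail (Or.inr ⟨a, haTw, hrecv v he⟩)⟩
        · have hcv : c.2 v = b.2 v := hfro v hv he
          rw [hcv]
          exact ih v
    · intro v
      rw [hL]
      exact ih v

end SaturationAux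

/-- Correctness of the coverability algorithm for reconfigurable
well-structured broadcast networks: `s` is coverable in `RBN(P)` iff `s` is
coverable in the saturated process `P'_w`. -/
theorem saturation_correct {S A : Type*} (le : S → S → Prop)
    (Rb Rr : S → A → S → Prop) (S₀ : Set S)
    (hwqo : IsWqo le)
    (compatB : ∀ s₁ t₁ a s₂, le s₁ t₁ → Rb s₁ a s₂ →
        ∃ t₂, le s₂ t₂ ∧ Rb t₁ a t₂)
    (compatR : ∀ s₁ t₁ a s₂, le s₁ t₁ → Rr s₁ a s₂ →
        ∃ t₂, le s₂ t₂ ∧ Rr t₁ a t₂)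
    (s : S) :
    RBNCoverable Rb Rr S₀ le s ↔ CovT Rb Rr S₀ le (Tw Rb Rr S₀ le) s := by
  obtain ⟨hrefl, htrans, -⟩ := hwqo
  constructor
  · rintro ⟨n, E₀, L₀, E, L, h1, h2, h3, h4, v, hv⟩
    exact ⟨L v, hv, sound_run le Rb Rr S₀ hrefl h3 h4 v⟩
  · rintro ⟨s', hle, hre⟩
    obtain ⟨i, hi⟩ := reachT_index Rb Rr S₀ le hre
    obtain ⟨n, E₀, L₀, E, L, h1, h2, h3, h4, v, hv⟩ :=
      reach'_of_reachT le Rb Rr S₀ compatB i s' hi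
    exact ⟨n, E₀, L₀, E, L, h1, h2, h3, h4, v, by rw [hv]; exact hle⟩
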